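/- If a tWF net N is substitution-sound, M is a disjoint substitution-sound pWF net, and p is a place of N, then N ⊗_p M is substitution-sound. -/

import Mathlib

structure Net where
  P : Finset ℕ
  T : Finset ℕ
  F : Finset (ℕ × ℕ)
  I : Finset ℕ
  O : Finset ℕ

namespace Net

def nodes (N : Net) : Finset ℕ := N.P ∪ N.T

def IsPetri (N : Net) : Prop :=
  Disjoint N.P N.T ∧ ∀ e ∈ N.F, (e.1 ∈ N.P ∧ e.2 ∈ N.T) ∨ (e.1 ∈ N.T ∧ e.2 ∈ N.P)

def edge (N : Net) (x y : ℕ) : Prop := (x, y) ∈ N.F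

def pathReach (N : Net) : ℕ → ℕ → Prop := Relation.ReflTransGen N.edge

def Connected (N : Net) : Prop :=
  (∀ x ∈ N.nodes, ∃ i ∈ N.I, N.pathReach i x) ∧
  (∀ x ∈ N.nodes, ∃ o ∈ N.O, N.pathReach x o)

/-- place workflow net -/
def IsPWF (N : Net) : Prop :=
  N.IsPetri ∧ N.I ⊆ N.P ∧ N.O ⊆ N.P ∧ N.I.Nonempty ∧ N.O.Nonempty ∧ N.Connected

/-- transition workflow net -/
def IsTWF (N : Net) : Prop :=
  N.IsPetri ∧ N.I ⊆ N.T ∧ N.O ⊆ N.T ∧ N.I.Nonempty ∧ N.O.Nonempty ∧ N.Connected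

def IsWF (N : Net) : Prop := N.IsPWF ∨ N.IsTWF

abbrev Marking := ℕ → ℕ

def pre (N : Net) (t : ℕ) : Marking := fun p => if (p, t) ∈ N.F then 1 else 0
def post (N : Net) (t : ℕ) : Marking := fun p => if (t, p) ∈ N.F then 1 else 0
def enabled (N : Net) (t : ℕ) (m : Marking) : Prop := t ∈ N.T ∧ N.pre t ≤ m
def fire (N : Net) (t : ℕ) (m : Marking) : Marking := fun p => m p - N.pre t p + N.post t p
def stepRel (N : Net) (m m' : Marking) : Prop := ∃ t, N.enabled t m ∧ m' = N.fire t m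
def reach (N : Net) : Marking → Marking → Prop := Relation.ReflTransGen N.stepRel

/-- the marking with `k` tokens on each element of `S` -/
def bag (k : ℕ) (S : Finset ℕ) : Marking := fun p => if p ∈ S then k else 0

def kSound (N : Net) (k : ℕ) : Prop :=
  ∀ m, N.reach (bag k N.I) m → N.reach m (bag k N.O)

def starSound (N : Net) : Prop := ∀ k, 1 ≤ k → N.kSound k

def subSound (N : Net) : Prop :=
  ∀ k k' : ℕ, k' ≤ k → ∀ m : Marking,
    N.reach (bag k N.I) (m + bag k' N.O) → N.reach m (bag (k - k') N.O)

/-- place completion of a tWF net -/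
def pc (N : Net) (pi po : ℕ) : Net where
  P := insert pi (insert po N.P)
  T := N.T
  F := (N.I.image fun t => (pi, t)) ∪ (N.O.image fun t => (t, po)) ∪ N.F
  I := {pi}
  O := {po}

/-- transition completion of a pWF net -/
def tc (N : Net) (t_i t_o : ℕ) : Net where
  P := N.P
  T := insert t_i (insert t_o N.T)
  F := (N.I.image fun p => (t_i, p)) ∪ (N.O.image fun p => (p, t_o)) ∪ N.F
  I := {t_i}
  O := {t_o}

/-- *-soundness of a tWF net: its place completion (for fresh names) is *-sound -/
def tStarSound (N : Net) : Prop :=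
  ∀ pi po : ℕ, pi ∉ N.nodes → po ∉ N.nodes → pi ≠ po → (N.pc pi po).starSound

/-- sub-soundness of a tWF net: its place completion (for fresh names) is sub-sound -/
def tSubSound (N : Net) : Prop :=
  ∀ pi po : ℕ, pi ∉ N.nodes → po ∉ N.nodes → pi ≠ po → (N.pc pi po).subSound

/-- preset of a node, as a finset -/
def inEdges (N : Net) (n : ℕ) : Finset ℕ := (N.F.filter fun e => e.2 = n).image Prod.fst
/-- postset of a node, as a finset -/
def outEdges (N : Net) (n : ℕ) : Finset ℕ := (N.F.filter fun e => e.1 = n).image Prod.snd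

/-- substitution of the node `n` of `N` by the net `M` (place or transition substitution,
depending on the type of `n`): each input node of `M` inherits the preset of `n`, each
output node of `M` inherits the postset of `n`. -/
def subst (N : Net) (n : ℕ) (M : Net) : Net where
  P := (N.P.erase n) ∪ M.P
  T := (N.T.erase n) ∪ M.T
  F := (N.F.filter fun e => e.1 ≠ n ∧ e.2 ≠ n) ∪ M.F
        ∪ (N.inEdges n ×ˢ M.I) ∪ (M.O ×ˢ N.outEdges n)
  I := if n ∈ N.I then (N.I.erase n) ∪ M.I else N.I
  O := if n ∈ N.O then (N.O.erase n) ∪ M.O else N.O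

def Acyclic (N : Net) : Prop := ∀ x, ¬ Relation.TransGen N.edge x x

/-- AND net condition (on top of being a WF net) -/
def IsAND (N : Net) : Prop :=
  N.Acyclic ∧ ∀ p ∈ N.P,
    ((p ∈ N.I ∧ (N.inEdges p).card = 0) ∨ (p ∉ N.I ∧ (N.inEdges p).card = 1)) ∧
    ((p ∈ N.O ∧ (N.outEdges p).card = 0) ∨ (p ∉ N.O ∧ (N.outEdges p).card = 1))

/-- OR net condition (on top of being a WF net) -/
def IsOR (N : Net) : Prop :=
  ∀ t ∈ N.T,
    ((t ∈ N.I ∧ (N.inEdges t).card = 0) ∨ (t ∉ N.I ∧ (N.inEdges t).card = 1)) ∧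
    ((t ∈ N.O ∧ (N.outEdges t).card = 0) ∨ (t ∉ N.O ∧ (N.outEdges t).card = 1))

end Net
namespace Net

/-! ### basic marking lemmas -/

lemma bag_zero (S : Finset ℕ) : bag 0 S = 0 := by
  funext q; simp [bag]

lemma bag_add (a b : ℕ) (S : Finset ℕ) : bag (a + b) S = bag a S + bag b S := by
  funext q; simp only [bag, Pi.add_apply]; split <;> simp

lemma fire_add (X : Net) (t : ℕ) (m x : Marking) (h : X.pre t ≤ m) :
    X.fire t (m + x) = X.fire t m + x := by
  funext q
  have := h q
  simp only [fire, Pi.add_apply] at *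
  omega

lemma reach_add (X : Net) {m m' : Marking} (h : X.reach m m') (x : Marking) :
    X.reach (m + x) (m' + x) := by
  induction h with
  | refl => exact Relation.ReflTransGen.refl
  | tail _ hstep ih =>
    rename_i b c _
    obtain ⟨t, ht, rfl⟩ := hstep
    exact ih.tail ⟨t, ⟨ht.1, le_trans ht.2 (by intro q; simp)⟩, (X.fire_add t b x ht.2).symm⟩

lemma reach_trans (X : Net) {a b c : Marking} (h1 : X.reach a b) (h2 : X.reach b c) :
    X.reach a c := Relation.ReflTransGen.trans h1 h2

/-- for a Petri net, transitions have zero pre/post outside the places -/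
lemma pre_eq_zero_of_not_mem (X : Net) (hX : X.IsPetri) {t q : ℕ} (ht : t ∈ X.T)
    (hq : q ∉ X.P) : X.pre t q = 0 := by
  simp only [pre, ite_eq_right_iff]
  intro hF
  rcases hX.2 _ hF with h | h
  · exact absurd h.1 hq
  · exact absurd ht (Finset.disjoint_left.1 hX.1 h.2)

lemma post_eq_zero_of_not_mem (X : Net) (hX : X.IsPetri) {t q : ℕ} (ht : t ∈ X.T)
    (hq : q ∉ X.P) : X.post t q = 0 := by
  simp only [post, ite_eq_right_iff]
  intro hF
  rcases hX.2 _ hF with h | h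
  · exact absurd ht (Finset.disjoint_left.1 hX.1 h.1)
  · exact absurd h.2 hq

lemma reach_outside (X : Net) (hX : X.IsPetri) {m m' : Marking} (h : X.reach m m')
    {q : ℕ} (hq : q ∉ X.P) : m' q = m q := by
  induction h with
  | refl => rfl
  | tail _ hstep ih =>
    obtain ⟨t, ht, rfl⟩ := hstep
    simp only [fire, X.pre_eq_zero_of_not_mem hX ht.1 hq,
      X.post_eq_zero_of_not_mem hX ht.1 hq, ih]
    omega

/-- in a connected net with transitions disjoint from output places,
every transition has an outgoing edge -/
lemma exists_out_edge (X : Net) (hX : X.IsPWF) {t : ℕ} (ht : t ∈ X.T) :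
    ∃ q, (t, q) ∈ X.F := by
  obtain ⟨o, ho, hpath⟩ := hX.2.2.2.2.2.2 t (Finset.mem_union_right _ ht)
  have htno : t ≠ o := by
    intro h; subst h
    exact Finset.disjoint_left.1 hX.1.1 (hX.2.2.1 ho) ht
  rcases (Relation.reflTransGen_iff_eq_or_transGen.1 hpath) with h | h
  · exact absurd h.symm htno
  · obtain ⟨y, hy, -⟩ := Relation.TransGen.head'_iff.1 h
    exact ⟨y, hy⟩

/-- in a pWF net, the only marking from which the empty marking is reachable is
the empty marking itself -/
lemma eq_zero_of_reach_zero (X : Net) (hX : X.IsPWF) {m : Marking}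
    (h : X.reach m 0) : m = 0 := by
  induction h using Relation.ReflTransGen.head_induction_on with
  | refl => rfl
  | head hstep _ ih =>
    exfalso
    obtain ⟨t, ht, rfl⟩ := hstep
    obtain ⟨q, hq⟩ := X.exists_out_edge hX ht.1
    have h0 := congrFun ih q
    simp only [fire, post, hq, if_pos, Pi.zero_apply] at h0
    omega

/-- key consequence of sub-soundness: one cannot overproduce outputs -/
lemma le_of_reach_bag (X : Net) (hX : X.IsPWF) (hs : X.subSound) {a b : ℕ} {μ : Marking}
    (h : X.reach (bag a X.I) (μ + bag b X.O)) : b ≤ a := by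
  by_contra hab
  push_neg at hab
  have hb : b = (a + (b - a)) := by omega
  rw [hb, add_comm a, bag_add] at h
  have h2 : X.reach (μ + bag (b-a) X.O) (bag (a - a) X.O) :=
    hs a a le_rfl _ (by rw [← add_assoc] at h; exact h)
  rw [Nat.sub_self, bag_zero] at h2
  have := X.eq_zero_of_reach_zero hX h2
  obtain ⟨o, ho⟩ := hX.2.2.2.2.1
  have := congrFun this o
  simp only [Pi.add_apply, bag, if_pos ho, Pi.zero_apply] at this
  omega

end Net
namespace Net

lemma mem_nodes_of_F (X : Net) (hX : X.IsPetri) {x y : ℕ} (h : (x, y) ∈ X.F) :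
    x ∈ X.nodes ∧ y ∈ X.nodes := by
  rcases hX.2 _ h with ⟨h1, h2⟩ | ⟨h1, h2⟩ <;>
    simp [nodes, Finset.mem_union, h1, h2]

lemma mem_inEdges (X : Net) {x n : ℕ} : x ∈ X.inEdges n ↔ (x, n) ∈ X.F := by
  simp only [inEdges, Finset.mem_image, Finset.mem_filter]
  constructor
  · rintro ⟨⟨e1, e2⟩, ⟨he, rfl⟩, rfl⟩; exact he
  · intro h; exact ⟨(x, n), ⟨h, rfl⟩, rfl⟩

lemma mem_outEdges (X : Net) {y n : ℕ} : y ∈ X.outEdges n ↔ (n, y) ∈ X.F := by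
  simp only [outEdges, Finset.mem_image, Finset.mem_filter]
  constructor
  · rintro ⟨⟨e1, e2⟩, ⟨he, rfl⟩, rfl⟩; exact he
  · intro h; exact ⟨(n, y), ⟨h, rfl⟩, rfl⟩

lemma mem_subst_F (K M : Net) (p : ℕ) {x y : ℕ} :
    (x, y) ∈ (K.subst p M).F ↔
      ((x, y) ∈ K.F ∧ x ≠ p ∧ y ≠ p) ∨ (x, y) ∈ M.F ∨
      ((x, p) ∈ K.F ∧ y ∈ M.I) ∨ (x ∈ M.O ∧ (p, y) ∈ K.F) := by
  simp only [subst, Finset.mem_union, Finset.mem_filter, Finset.mem_product,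
    ← mem_inEdges, ← mem_outEdges, mem_inEdges, mem_outEdges]
  tauto

section Struct

variable {K M : Net} {p : ℕ}
variable (hKpetri : K.IsPetri) (hM : M.IsPWF)
variable (hd : Disjoint K.nodes M.nodes) (hp : p ∈ K.P)

lemma subst_T (hpT : p ∉ K.T) : (K.subst p M).T = K.T ∪ M.T := by
  simp [subst, Finset.erase_eq_of_notMem hpT]

lemma subst_I (hpI : p ∉ K.I) : (K.subst p M).I = K.I := if_neg hpI

lemma subst_O (hpO : p ∉ K.O) : (K.subst p M).O = K.O := if_neg hpO

include hKpetri hM hd in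
lemma subst_pre_M {t : ℕ} (ht : t ∈ M.T) : (K.subst p M).pre t = M.pre t := by
  have htK : t ∉ K.nodes := Finset.disjoint_right.1 hd (Finset.mem_union_right _ ht)
  funext q
  simp only [pre, mem_subst_F]
  congr 1
  simp only [eq_iff_iff]
  constructor
  · rintro (⟨h, -⟩ | h | ⟨-, h⟩ | ⟨-, h⟩)
    · exact absurd (K.mem_nodes_of_F hKpetri h).2 htK
    · exact h
    · exact absurd ht (Finset.disjoint_left.1 hM.1.1 (hM.2.1 h))
    · exact absurd (K.mem_nodes_of_F hKpetri h).2 htK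
  · tauto

include hKpetri hM hd in
lemma subst_post_M {t : ℕ} (ht : t ∈ M.T) : (K.subst p M).post t = M.post t := by
  have htK : t ∉ K.nodes := Finset.disjoint_right.1 hd (Finset.mem_union_right _ ht)
  funext q
  simp only [post, mem_subst_F]
  congr 1
  simp only [eq_iff_iff]
  constructor
  · rintro (⟨h, -⟩ | h | ⟨h, -⟩ | ⟨h, -⟩)
    · exact absurd (K.mem_nodes_of_F hKpetri h).1 htK
    · exact h
    · exact absurd (K.mem_nodes_of_F hKpetri h).1 htK
    · exact absurd ht (Finset.disjoint_left.1 hM.1.1 (hM.2.2.1 h))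
  · tauto

include hKpetri hM hd hp in
lemma subst_pre_K {t : ℕ} (ht : t ∈ K.T) (q : ℕ) :
    (K.subst p M).pre t q =
      (if (q, t) ∈ K.F ∧ q ≠ p then 1 else 0) +
      (if q ∈ M.O ∧ (p, t) ∈ K.F then 1 else 0) := by
  have htM : t ∉ M.nodes := Finset.disjoint_left.1 hd (Finset.mem_union_right _ ht)
  have htp : t ≠ p := fun h => Finset.disjoint_left.1 hKpetri.1 hp (h ▸ ht)
  have hx : ¬ ((q, t) ∈ K.F ∧ q ≠ p ∧ q ∈ M.O) := by
    rintro ⟨h1, -, h3⟩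
    exact Finset.disjoint_right.1 hd (Finset.mem_union_left _ (hM.2.2.1 h3))
      (K.mem_nodes_of_F hKpetri h1).1
  have hMF : (q, t) ∉ M.F := fun h =>
    htM (M.mem_nodes_of_F hM.1 h).2
  have hMI : t ∉ M.I := fun h => htM (Finset.mem_union_left _ (hM.2.1 h))
  have hiff : (((q, t) ∈ K.F ∧ q ≠ p ∧ t ≠ p) ∨ (q, t) ∈ M.F ∨
      ((q, p) ∈ K.F ∧ t ∈ M.I) ∨ (q ∈ M.O ∧ (p, t) ∈ K.F)) ↔
      (((q, t) ∈ K.F ∧ q ≠ p) ∨ (q ∈ M.O ∧ (p, t) ∈ K.F)) := by tauto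
  simp only [pre, mem_subst_F, hiff]
  by_cases h1 : (q, t) ∈ K.F ∧ q ≠ p <;> by_cases h2 : q ∈ M.O ∧ (p, t) ∈ K.F
  · exact absurd ⟨h1.1, h1.2, h2.1⟩ hx
  all_goals simp [h1, h2]

include hKpetri hM hd hp in
lemma subst_post_K {t : ℕ} (ht : t ∈ K.T) (q : ℕ) :
    (K.subst p M).post t q =
      (if (t, q) ∈ K.F ∧ q ≠ p then 1 else 0) +
      (if q ∈ M.I ∧ (t, p) ∈ K.F then 1 else 0) := by
  have htM : t ∉ M.nodes := Finset.disjoint_left.1 hd (Finset.mem_union_right _ ht)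
  have htp : t ≠ p := fun h => Finset.disjoint_left.1 hKpetri.1 hp (h ▸ ht)
  have hx : ¬ (((t, q) ∈ K.F ∧ q ≠ p) ∧ q ∈ M.I) := by
    rintro ⟨⟨h1, -⟩, h3⟩
    exact Finset.disjoint_right.1 hd (Finset.mem_union_left _ (hM.2.1 h3))
      (K.mem_nodes_of_F hKpetri h1).2
  have hMF : (t, q) ∉ M.F := fun h => htM (M.mem_nodes_of_F hM.1 h).1
  have hMO : t ∉ M.O := fun h => htM (Finset.mem_union_left _ (hM.2.2.1 h))
  have hiff : (((t, q) ∈ K.F ∧ t ≠ p ∧ q ≠ p) ∨ (t, q) ∈ M.F ∨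
      ((t, p) ∈ K.F ∧ q ∈ M.I) ∨ (t ∈ M.O ∧ (p, q) ∈ K.F)) ↔
      (((t, q) ∈ K.F ∧ q ≠ p) ∨ (q ∈ M.I ∧ (t, p) ∈ K.F)) := by tauto
  simp only [post, mem_subst_F, hiff]
  by_cases h1 : (t, q) ∈ K.F ∧ q ≠ p <;> by_cases h2 : q ∈ M.I ∧ (t, p) ∈ K.F
  · exact absurd ⟨h1, h2.1⟩ hx
  all_goals simp [h1, h2]

end Struct

end Net
namespace Net

section Lift

variable {K M : Net} {p : ℕ}
variable (hKpetri : K.IsPetri) (hM : M.IsPWF)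
variable (hd : Disjoint K.nodes M.nodes) (hp : p ∈ K.P)

include hKpetri hd hp in
lemma subst_lift_M {x y : Marking} (h : M.reach x y) (z : Marking) (hM : M.IsPWF) :
    (K.subst p M).reach (x + z) (y + z) := by
  have hpT : p ∉ K.T := Finset.disjoint_left.1 hKpetri.1 hp
  induction h with
  | refl => exact Relation.ReflTransGen.refl
  | tail _ hstep ih =>
    rename_i b c _
    obtain ⟨t, ⟨ht, hpre⟩, rfl⟩ := hstep
    refine ih.tail ⟨t, ⟨?_, ?_⟩, ?_⟩
    · rw [subst_T hpT]; exact Finset.mem_union_right _ ht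
    · rw [subst_pre_M hKpetri hM hd]
      · exact le_trans hpre le_self_add
      · exact ht
    · have hfeq : (K.subst p M).fire t (b + z) = M.fire t (b + z) := by
        funext q
        simp only [fire, subst_pre_M hKpetri hM hd ht, subst_post_M hKpetri hM hd ht]
      rw [hfeq, M.fire_add t b z hpre]

include hKpetri hM hd hp in
lemma subst_lift_K (hsM : M.subSound) {ν ν' : Marking} (h : K.reach ν ν')
    (hz : ∀ q, q ∉ K.P → ν q = 0) :
    (K.subst p M).reach (fun q => (if q = p then 0 else ν q) + bag (ν p) M.O q)
                        (fun q => (if q = p then 0 else ν' q) + bag (ν' p) M.O q) := by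
  have hpT : p ∉ K.T := Finset.disjoint_left.1 hKpetri.1 hp
  have hpM : p ∉ M.P := fun h =>
    Finset.disjoint_left.1 hd (Finset.mem_union_left _ hp) (Finset.mem_union_left _ h)
  induction h with
  | refl => exact Relation.ReflTransGen.refl
  | tail hr hstep ih =>
    rename_i b c
    obtain ⟨t, ⟨ht, hpre⟩, rfl⟩ := hstep
    refine (ih).trans ?_
    -- facts about the current marking b
    have hb0 : ∀ q, q ∉ K.P → b q = 0 := fun q hq => by
      rw [K.reach_outside hKpetri hr hq]; exact hz q hq
    have hbM : ∀ q, q ∈ M.P → b q = 0 := fun q hq =>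
      hb0 q (fun h => Finset.disjoint_left.1 hd (Finset.mem_union_left _ h)
        (Finset.mem_union_left _ hq))
    have hKFM : ∀ q, q ∈ M.P → (q, t) ∉ K.F ∧ (t, q) ∉ K.F := by
      intro q hq
      have hqK : q ∉ K.nodes :=
        Finset.disjoint_right.1 hd (Finset.mem_union_left _ hq)
      exact ⟨fun h => hqK (K.mem_nodes_of_F hKpetri h).1,
             fun h => hqK (K.mem_nodes_of_F hKpetri h).2⟩
    have hMOP : ∀ q, q ∈ M.O → q ∈ M.P := fun q hq => hM.2.2.1 hq
    have hMIP : ∀ q, q ∈ M.I → q ∈ M.P := fun q hq => hM.2.1 hq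
    have hprep : K.pre t p ≤ b p := hpre p
    have hpreq : ∀ q, K.pre t q ≤ b q := hpre
    -- enabledness in the composed net at Ψ b
    have hen : (K.subst p M).enabled t
        (fun q => (if q = p then 0 else b q) + bag (b p) M.O q) := by
      refine ⟨by rw [subst_T hpT]; exact Finset.mem_union_left _ ht, fun q => ?_⟩
      rw [subst_pre_K hKpetri hM hd hp ht q]
      by_cases hqp : q = p
      · have h1 : ¬((q, t) ∈ K.F ∧ q ≠ p) := fun h => h.2 hqp
        have h2 : ¬(q ∈ M.O ∧ (p, t) ∈ K.F) := fun h => hpM (hqp ▸ hMOP q h.1)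
        simp [h1, h2]
      · simp only [if_neg hqp, bag]
        by_cases hqO : q ∈ M.O
        · have h1 : (q, t) ∉ K.F := (hKFM q (hMOP q hqO)).1
          have h2 := hprep
          simp only [pre] at h2
          by_cases hpt : (p, t) ∈ K.F <;>
            simp_all [h1, hqO, hpt] <;> omega
        · have h2 := hpreq q
          simp only [pre] at h2
          by_cases hqF : (q, t) ∈ K.F <;> simp_all [hqO, hqF]
    -- value facts
    have hpMO : p ∉ M.O := fun h => hpM (hMOP p h)
    have hpMI : p ∉ M.I := fun h => hpM (hMIP p h)
    by_cases hin : (t, p) ∈ K.F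
    · -- t produces a token on p : fire t, then run M from I to O
      have hM1 : M.reach (bag 1 M.I) (bag 1 M.O) := by
        have := hsM 1 0 (by omega) (bag 1 M.I)
          (by rw [bag_zero, add_zero]; exact Relation.ReflTransGen.refl)
        simpa using this
      set z : Marking := fun q =>
        (if q = p then 0 else K.fire t b q) + bag (b p - K.pre t p) M.O q with hz'
      have heq : (K.subst p M).fire t
          (fun q => (if q = p then 0 else b q) + bag (b p) M.O q) = bag 1 M.I + z := by
        funext q
        simp only [fire, subst_pre_K hKpetri hM hd hp ht q,
          subst_post_K hKpetri hM hd hp ht q, hz', Pi.add_apply]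
        by_cases hqp : q = p
        · have e1 : ¬((p, t) ∈ K.F ∧ p ≠ p) := fun h => h.2 rfl
          have e2 : ¬((t, p) ∈ K.F ∧ p ≠ p) := fun h => h.2 rfl
          have e3 : ¬(p ∈ M.O ∧ (p, t) ∈ K.F) := fun h => hpMO h.1
          have e4 : ¬(p ∈ M.I ∧ (t, p) ∈ K.F) := fun h => hpMI h.1
          simp [hqp, pre, post, bag, fire, e1, e2, e3, e4, hpMO, hpMI]
          all_goals omega
        · by_cases hqM : q ∈ M.P
          · have hqt : (q, t) ∉ K.F := (hKFM q hqM).1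
            have htq : (t, q) ∉ K.F := (hKFM q hqM).2
            have hbq : b q = 0 := hbM q hqM
            have h1 : ¬((q, t) ∈ K.F ∧ q ≠ p) := fun h => hqt h.1
            have h2 : ¬((t, q) ∈ K.F ∧ q ≠ p) := fun h => htq h.1
            simp only [pre, post, bag, fire, if_neg hqp, if_neg h1, if_neg h2,
              if_neg hqt, if_neg htq, hbq]
            have hδ := hprep
            simp only [pre] at hδ
            by_cases hqO : q ∈ M.O <;> by_cases hqI : q ∈ M.I <;>
              by_cases hpt : (p, t) ∈ K.F <;>
              simp_all [hqO, hqI, hpt, hin] <;> omega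
          · have hqO : q ∉ M.O := fun h => hqM (hMOP q h)
            have hqI : q ∉ M.I := fun h => hqM (hMIP q h)
            have h2 : ¬(q ∈ M.O ∧ (p, t) ∈ K.F) := fun h => hqO h.1
            have h3 : ¬(q ∈ M.I ∧ (t, p) ∈ K.F) := fun h => hqI h.1
            have hδ := hpreq q
            simp only [pre] at hδ
            simp only [pre, post, bag, fire, if_neg hqp, if_neg hqO, if_neg hqI,
              if_neg h2, if_neg h3]
            by_cases hqt : (q, t) ∈ K.F <;> by_cases htq : (t, q) ∈ K.F <;>
              simp_all [hqt, htq] <;> omega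
      have hstep1 : (K.subst p M).stepRel
          (fun q => (if q = p then 0 else b q) + bag (b p) M.O q) (bag 1 M.I + z) :=
        ⟨t, hen, heq.symm⟩
      have hreach2 : (K.subst p M).reach (bag 1 M.I + z) (bag 1 M.O + z) :=
        subst_lift_M hKpetri hd hp hM1 z hM
      have hfinal : bag 1 M.O + z = fun q =>
          (if q = p then 0 else K.fire t b q) + bag (K.fire t b p) M.O q := by
        funext q
        have hfp : K.fire t b p = b p - K.pre t p + 1 := by
          simp only [fire, post, if_pos hin]
        simp only [hz', Pi.add_apply, hfp, bag]
        by_cases hqp : q = p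
        · subst hqp; simp [if_neg hpMO]
        · by_cases hqO : q ∈ M.O <;> simp [hqp, hqO] <;> omega
      exact (Relation.ReflTransGen.single hstep1).trans (hfinal ▸ hreach2)
    · -- t does not produce on p : a single step suffices
      have heq : (K.subst p M).fire t
          (fun q => (if q = p then 0 else b q) + bag (b p) M.O q) = fun q =>
          (if q = p then 0 else K.fire t b q) + bag (K.fire t b p) M.O q := by
        funext q
        have hfp : K.fire t b p = b p - K.pre t p := by
          simp only [fire, post, if_neg hin, Nat.add_zero]
        simp only [fire, subst_pre_K hKpetri hM hd hp ht q,
          subst_post_K hKpetri hM hd hp ht q, Pi.add_apply, hfp]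
        by_cases hqp : q = p
        · have e1 : ¬((p, t) ∈ K.F ∧ p ≠ p) := fun h => h.2 rfl
          have e2 : ¬((t, p) ∈ K.F ∧ p ≠ p) := fun h => h.2 rfl
          have e3 : ¬(p ∈ M.O ∧ (p, t) ∈ K.F) := fun h => hpMO h.1
          have e4 : ¬(p ∈ M.I ∧ (t, p) ∈ K.F) := fun h => hpMI h.1
          simp [hqp, pre, post, bag, fire, e1, e2, e3, e4, hpMO, hpMI]
          all_goals omega
        · by_cases hqM : q ∈ M.P
          · have hqt : (q, t) ∉ K.F := (hKFM q hqM).1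
            have htq : (t, q) ∉ K.F := (hKFM q hqM).2
            have hbq : b q = 0 := hbM q hqM
            have h1 : ¬((q, t) ∈ K.F ∧ q ≠ p) := fun h => hqt h.1
            have h2 : ¬((t, q) ∈ K.F ∧ q ≠ p) := fun h => htq h.1
            simp only [pre, post, bag, fire, if_neg hqp, if_neg h1, if_neg h2,
              if_neg hqt, if_neg htq, hbq]
            have hδ := hprep
            simp only [pre] at hδ
            by_cases hqO : q ∈ M.O <;> by_cases hqI : q ∈ M.I <;>
              by_cases hpt : (p, t) ∈ K.F <;>
              simp_all [hqO, hqI, hpt, hin] <;> omega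
          · have hqO : q ∉ M.O := fun h => hqM (hMOP q h)
            have hqI : q ∉ M.I := fun h => hqM (hMIP q h)
            have h2 : ¬(q ∈ M.O ∧ (p, t) ∈ K.F) := fun h => hqO h.1
            have h3 : ¬(q ∈ M.I ∧ (t, p) ∈ K.F) := fun h => hqI h.1
            have hδ := hpreq q
            simp only [pre] at hδ
            simp only [pre, post, bag, fire, if_neg hqp, if_neg hqO, if_neg hqI,
              if_neg h2, if_neg h3]
            by_cases hqt : (q, t) ∈ K.F <;> by_cases htq : (t, q) ∈ K.F <;>
              simp_all [hqt, htq] <;> omega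
      exact Relation.ReflTransGen.single ⟨t, hen, heq.symm⟩

end Lift

end Net
namespace Net

section Invariant

variable {K M : Net} {p : ℕ}
variable (hKpetri : K.IsPetri) (hM : M.IsPWF)
variable (hd : Disjoint K.nodes M.nodes) (hp : p ∈ K.P)

include hKpetri hM hd hp in
lemma subst_invariant (hpI : p ∉ K.I) (hKI : K.I ⊆ K.P) (hsM : M.subSound)
    (k : ℕ) {f : Marking} (h : (K.subst p M).reach (bag k K.I) f) :
    ∃ a b ν μ, b ≤ a ∧ K.reach (bag k K.I) ν ∧
      M.reach (bag a M.I) (μ + bag b M.O) ∧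
      ν p = a - b ∧ ∀ q, f q = (if q = p then 0 else ν q) + μ q := by
  have hpT : p ∉ K.T := Finset.disjoint_left.1 hKpetri.1 hp
  have hpM : p ∉ M.P := fun h =>
    Finset.disjoint_left.1 hd (Finset.mem_union_left _ hp) (Finset.mem_union_left _ h)
  have hMOP : ∀ q ∈ M.O, q ∈ M.P := fun q hq => hM.2.2.1 hq
  have hMIP : ∀ q ∈ M.I, q ∈ M.P := fun q hq => hM.2.1 hq
  have hpMO : p ∉ M.O := fun h => hpM (hMOP p h)
  have hpMI : p ∉ M.I := fun h => hpM (hMIP p h)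
  have hMPK : ∀ q ∈ M.P, q ∉ K.P := fun q hq h =>
    Finset.disjoint_left.1 hd (Finset.mem_union_left _ h) (Finset.mem_union_left _ hq)
  have hKPM : ∀ q ∈ K.P, q ∉ M.P := fun q hq h => hMPK q h hq
  induction h with
  | refl =>
    refine ⟨0, 0, bag k K.I, 0, le_rfl, Relation.ReflTransGen.refl, ?_, ?_, ?_⟩
    · rw [bag_zero, bag_zero, zero_add]; exact Relation.ReflTransGen.refl
    · simp [bag, hpI]
    · intro q
      by_cases hqp : q = p
      · simp [hqp, bag, hpI]
      · simp [hqp]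
  | tail hr hstep ih =>
    rename_i g c
    obtain ⟨a, b, ν, μ, hba, hνr, hμr, hνp, hfq⟩ := ih
    obtain ⟨t, ⟨htT, htpre⟩, rfl⟩ := hstep
    -- supports
    have hν0 : ∀ q, q ∉ K.P → ν q = 0 := fun q hq => by
      rw [K.reach_outside hKpetri hνr hq]
      simp only [bag, ite_eq_right_iff]
      intro hqI; exact absurd (hKI hqI) hq
    have hμ0 : ∀ q, q ∉ M.P → μ q = 0 := fun q hq => by
      have h2 := M.reach_outside hM.1 hμr hq
      have hqI : q ∉ M.I := fun h => hq (hMIP q h)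
      have hqO : q ∉ M.O := fun h => hq (hMOP q h)
      simp only [Pi.add_apply, bag, if_neg hqI, if_neg hqO] at h2
      omega
    rw [subst_T hpT] at htT
    rcases Finset.mem_union.1 htT with htK | htM
    case inr =>
      -- a transition of M fires
      have hMFq : ∀ q, q ∉ M.P → (q, t) ∉ M.F ∧ (t, q) ∉ M.F := by
        intro q hq
        constructor
        · intro h
          rcases hM.1.2 _ h with ⟨a1, -⟩ | ⟨-, a2⟩
          · exact hq a1
          · exact Finset.disjoint_left.1 hM.1.1 a2 htM
        · intro h
          rcases hM.1.2 _ h with ⟨a1, -⟩ | ⟨-, a2⟩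
          · exact Finset.disjoint_left.1 hM.1.1 a1 htM
          · exact hq a2
      have hpreμ : M.pre t ≤ μ := by
        intro q
        by_cases hq : q ∈ M.P
        · have h1 := htpre q
          rw [subst_pre_M hKpetri hM hd htM] at h1
          have h2 := hfq q
          have h3 : ν q = 0 := hν0 q (hMPK q hq)
          have h4 : q ≠ p := fun h => hpM (h ▸ hq)
          rw [h2, if_neg h4, h3, zero_add] at h1
          exact h1
        · rw [M.pre_eq_zero_of_not_mem hM.1 htM hq]
          exact Nat.zero_le _
      refine ⟨a, b, ν, M.fire t μ, hba, hνr, ?_, hνp, ?_⟩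
      · exact hμr.tail ⟨t, ⟨htM, le_trans hpreμ le_self_add⟩,
          (M.fire_add t μ _ hpreμ).symm⟩
      · intro q
        have h2 := hfq q
        simp only [fire]
        rw [subst_pre_M hKpetri hM hd htM, subst_post_M hKpetri hM hd htM]
        simp only [pre, post]
        by_cases hq : q ∈ M.P
        · have h3 : ν q = 0 := hν0 q (hMPK q hq)
          have h4 : q ≠ p := fun h => hpM (h ▸ hq)
          have h5 := hpreμ q
          simp only [pre] at h5
          rw [h2, if_neg h4, h3]
          by_cases hqF : (q, t) ∈ M.F <;> by_cases hFq : (t, q) ∈ M.F <;>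
            simp [hqF, hFq] at h5 ⊢ <;> omega
        · have h6 := (hMFq q hq).1
          have h7 := (hMFq q hq).2
          have h8 : μ q = 0 := hμ0 q hq
          rw [h2, if_neg h6, if_neg h7, h8]
          omega
    case inl =>
      -- a transition of K fires
      have hKFM : ∀ q, q ∈ M.P → (q, t) ∉ K.F ∧ (t, q) ∉ K.F := by
        intro q hq
        have hqK : q ∉ K.nodes :=
          Finset.disjoint_right.1 hd (Finset.mem_union_left _ hq)
        exact ⟨fun h => hqK (K.mem_nodes_of_F hKpetri h).1,
               fun h => hqK (K.mem_nodes_of_F hKpetri h).2⟩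
      have hμO : (p, t) ∈ K.F → ∀ q ∈ M.O, 1 ≤ μ q := by
        intro hout q hqO
        have h1 := htpre q
        rw [subst_pre_K hKpetri hM hd hp htK q] at h1
        have h2 := hfq q
        have hq : q ∈ M.P := hMOP q hqO
        have h3 : ν q = 0 := hν0 q (hMPK q hq)
        have h4 : q ≠ p := fun h => hpM (h ▸ hq)
        have e1 : ¬((q, t) ∈ K.F ∧ q ≠ p) := fun h => (hKFM q hq).1 h.1
        rw [h2, if_neg h4, h3, zero_add, if_neg e1, if_pos ⟨hqO, hout⟩, zero_add] at h1
        exact h1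
      have hba' : (p, t) ∈ K.F → b + 1 ≤ a := by
        intro hout
        have hrw : μ + bag b M.O = (fun q => μ q - bag 1 M.O q) + bag (b + 1) M.O := by
          funext q
          simp only [Pi.add_apply, bag]
          by_cases hqO : q ∈ M.O
          · have := hμO hout q hqO; simp only [if_pos hqO]; omega
          · simp [hqO]
        exact M.le_of_reach_bag hM hsM (hrw ▸ hμr)
      have hKen : K.pre t ≤ ν := by
        intro q
        by_cases hqp : q = p
        · rw [hqp]
          simp only [pre]
          by_cases hout : (p, t) ∈ K.F
          · have := hba' hout
            rw [if_pos hout, hνp]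
            omega
          · simp [hout]
        · by_cases hqP : q ∈ K.P
          · have h1 := htpre q
            rw [subst_pre_K hKpetri hM hd hp htK q] at h1
            have h2 := hfq q
            have hqM : q ∉ M.P := hKPM q hqP
            have hqO : q ∉ M.O := fun h => hqM (hMOP q h)
            have h3 : μ q = 0 := hμ0 q hqM
            have e2 : ¬(q ∈ M.O ∧ (p, t) ∈ K.F) := fun h => hqO h.1
            rw [h2, if_neg hqp, h3, add_zero, if_neg e2, add_zero] at h1
            simp only [pre]
            by_cases hqF : (q, t) ∈ K.F
            · rw [if_pos hqF]
              have c1 : (q, t) ∈ K.F ∧ q ≠ p := ⟨hqF, hqp⟩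
              rw [if_pos c1] at h1
              exact h1
            · simp [hqF]
          · rw [K.pre_eq_zero_of_not_mem hKpetri htK hqP]
            exact Nat.zero_le _
      refine ⟨(if (t, p) ∈ K.F then a + 1 else a), (if (p, t) ∈ K.F then b + 1 else b),
        K.fire t ν,
        (fun q => μ q - (if q ∈ M.O ∧ (p, t) ∈ K.F then 1 else 0) +
          (if q ∈ M.I ∧ (t, p) ∈ K.F then 1 else 0)), ?_, ?_, ?_, ?_, ?_⟩
      · by_cases h2 : (p, t) ∈ K.F
        · have := hba' h2
          by_cases h1 : (t, p) ∈ K.F <;> simp [h1, h2] <;> omega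
        · by_cases h1 : (t, p) ∈ K.F <;> simp [h1, h2] <;> omega
      · exact hνr.tail ⟨t, ⟨htK, hKen⟩, rfl⟩
      · -- extended M-run
        by_cases hin : (t, p) ∈ K.F
        · have hbase : M.reach (bag (a + 1) M.I) ((μ + bag b M.O) + bag 1 M.I) := by
            rw [bag_add]
            exact M.reach_add hμr (bag 1 M.I)
          have hrw : (μ + bag b M.O) + bag 1 M.I =
              (fun q => μ q - (if q ∈ M.O ∧ (p, t) ∈ K.F then 1 else 0) +
                (if q ∈ M.I ∧ (t, p) ∈ K.F then 1 else 0)) +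
              bag (if (p, t) ∈ K.F then b + 1 else b) M.O := by
            funext q
            simp only [Pi.add_apply, bag]
            by_cases hqO : q ∈ M.O <;> by_cases hqI : q ∈ M.I <;>
              by_cases hout : (p, t) ∈ K.F
            all_goals
              first
              | (have h9 := hμO ‹(p, t) ∈ K.F› q ‹q ∈ M.O›
                 simp [hqO, hqI, hout, hin]; omega)
              | (simp [hqO, hqI, hout, hin]; try omega)
          rw [if_pos hin, ← hrw]
          exact hbase
        · have hrw : μ + bag b M.O =
              (fun q => μ q - (if q ∈ M.O ∧ (p, t) ∈ K.F then 1 else 0) +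
                (if q ∈ M.I ∧ (t, p) ∈ K.F then 1 else 0)) +
              bag (if (p, t) ∈ K.F then b + 1 else b) M.O := by
            funext q
            simp only [Pi.add_apply, bag]
            by_cases hqO : q ∈ M.O <;> by_cases hqI : q ∈ M.I <;>
              by_cases hout : (p, t) ∈ K.F
            all_goals
              first
              | (have h9 := hμO ‹(p, t) ∈ K.F› q ‹q ∈ M.O›
                 simp [hqO, hqI, hout, hin]; omega)
              | (simp [hqO, hqI, hout, hin]; try omega)
          rw [if_neg hin, ← hrw]
          exact hμr
      · -- token count on p
        simp only [fire, pre, post]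
        have h3 : (if (p, t) ∈ K.F then 1 else 0) ≤ ν p := by
          have := hKen p
          simpa only [pre] using this
        by_cases h1 : (t, p) ∈ K.F <;> by_cases h2 : (p, t) ∈ K.F <;>
          simp only [h1, h2, if_true, if_false] at h3 ⊢ <;>
          first
            | omega
            | (have := hba' h2; omega)
      · -- marking decomposition
        intro q
        simp only [fire, subst_pre_K hKpetri hM hd hp htK q,
          subst_post_K hKpetri hM hd hp htK q]
        by_cases hqp : q = p
        · have e1 : ¬((q, t) ∈ K.F ∧ q ≠ p) := fun h => h.2 hqp
          have e2 : ¬((t, q) ∈ K.F ∧ q ≠ p) := fun h => h.2 hqp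
          have e3 : ¬(q ∈ M.O ∧ (p, t) ∈ K.F) := fun h => hpMO (hqp ▸ h.1)
          have e4 : ¬(q ∈ M.I ∧ (t, p) ∈ K.F) := fun h => hpMI (hqp ▸ h.1)
          have h2 := hfq q
          rw [if_pos hqp] at h2 ⊢
          rw [if_neg e1, if_neg e2, if_neg e3, if_neg e4, h2]
          simp
        · rw [if_neg hqp]
          by_cases hqM : q ∈ M.P
          · have hqt := (hKFM q hqM).1
            have htq := (hKFM q hqM).2
            have e1 : ¬((q, t) ∈ K.F ∧ q ≠ p) := fun h => hqt h.1
            have e2 : ¬((t, q) ∈ K.F ∧ q ≠ p) := fun h => htq h.1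
            have h2 := hfq q
            have h3 : ν q = 0 := hν0 q (hMPK q hqM)
            rw [if_neg hqp] at h2
            rw [if_neg e1, if_neg e2, h2, h3]
            simp only [pre, post, if_neg hqt, if_neg htq]
            by_cases c3 : q ∈ M.O ∧ (p, t) ∈ K.F <;>
              by_cases c4 : q ∈ M.I ∧ (t, p) ∈ K.F <;>
              simp [c3, c4]
          · have hqO : q ∉ M.O := fun h => hqM (hMOP q h)
            have hqI : q ∉ M.I := fun h => hqM (hMIP q h)
            have e3 : ¬(q ∈ M.O ∧ (p, t) ∈ K.F) := fun h => hqO h.1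
            have e4 : ¬(q ∈ M.I ∧ (t, p) ∈ K.F) := fun h => hqI h.1
            have h2 := hfq q
            have h3 : μ q = 0 := hμ0 q hqM
            have h5 : (if (q, t) ∈ K.F then 1 else 0) ≤ ν q := by
              have := hKen q
              simpa only [pre] using this
            rw [if_neg hqp] at h2
            rw [if_neg e3, if_neg e4, h2, h3]
            simp only [fire, pre, post]
            by_cases hqF : (q, t) ∈ K.F <;> by_cases hFq : (t, q) ∈ K.F <;>
              simp [hqF, hFq, hqp] at h5 ⊢ <;> omega

end Invariant

end Net
namespace Net

lemma subst_subSound (K M : Net) (p : ℕ)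
    (hKpetri : K.IsPetri) (hM : M.IsPWF)
    (hd : Disjoint K.nodes M.nodes) (hp : p ∈ K.P)
    (hpI : p ∉ K.I) (hpO : p ∉ K.O) (hKI : K.I ⊆ K.P) (hKO : K.O ⊆ K.P)
    (hsK : K.subSound) (hsM : M.subSound) : (K.subst p M).subSound := by
  have hpT : p ∉ K.T := Finset.disjoint_left.1 hKpetri.1 hp
  have hpM : p ∉ M.P := fun h =>
    Finset.disjoint_left.1 hd (Finset.mem_union_left _ hp) (Finset.mem_union_left _ h)
  have hMOP : ∀ q ∈ M.O, q ∈ M.P := fun q hq => hM.2.2.1 hq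
  have hMIP : ∀ q ∈ M.I, q ∈ M.P := fun q hq => hM.2.1 hq
  have hpMO : p ∉ M.O := fun h => hpM (hMOP p h)
  have hpMI : p ∉ M.I := fun h => hpM (hMIP p h)
  have hMPK : ∀ q ∈ M.P, q ∉ K.P := fun q hq h =>
    Finset.disjoint_left.1 hd (Finset.mem_union_left _ h) (Finset.mem_union_left _ hq)
  have hKPM : ∀ q ∈ K.P, q ∉ M.P := fun q hq h => hMPK q h hq
  have hMPKO : ∀ q ∈ M.P, q ∉ K.O := fun q hq h => hMPK q hq (hKO h)
  intro k k' hk' m hreach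
  rw [subst_I hpI, subst_O hpO] at hreach
  rw [subst_O hpO]
  obtain ⟨a, b, ν, μ, hba, hνr, hμr, hνp, hfq⟩ :=
    subst_invariant hKpetri hM hd hp hpI hKI hsM k hreach
  have hν0 : ∀ q, q ∉ K.P → ν q = 0 := fun q hq => by
    rw [K.reach_outside hKpetri hνr hq]
    simp only [bag, ite_eq_right_iff]
    intro hqI; exact absurd (hKI hqI) hq
  have hμ0 : ∀ q, q ∉ M.P → μ q = 0 := fun q hq => by
    have h2 := M.reach_outside hM.1 hμr hq
    have hqI : q ∉ M.I := fun h => hq (hMIP q h)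
    have hqO : q ∉ M.O := fun h => hq (hMOP q h)
    simp only [Pi.add_apply, bag, if_neg hqI, if_neg hqO] at h2
    omega
  have hmp : m p = 0 := by
    have h1 := hfq p
    simp only [Pi.add_apply, bag, if_pos rfl, if_neg hpO, zero_add,
      hμ0 p hpM, add_zero] at h1
    exact h1
  have hm0 : ∀ q, q ∉ K.P → q ∉ M.P → m q = 0 := by
    intro q hq1 hq2
    have h1 := hfq q
    have hqO : q ∉ K.O := fun h => hq1 (hKO h)
    by_cases hqp : q = p
    · rw [hqp]; exact hmp
    · simp only [Pi.add_apply, bag, if_neg hqO, if_neg hqp, hν0 q hq1,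
        hμ0 q hq2, add_zero, zero_add] at h1
      exact h1
  set mK : Marking := fun q => if q = p then a - b else if q ∈ M.P then 0 else m q
    with hmK
  have hνeq : ν = mK + bag k' K.O := by
    funext q
    by_cases hqp : q = p
    · rw [hqp]
      simp [hmK, bag, hpO, hνp]
    · by_cases hqM : q ∈ M.P
      · have h1 : ν q = 0 := hν0 q (hMPK q hqM)
        have h2 : q ∉ K.O := hMPKO q hqM
        simp only [hmK, Pi.add_apply, bag, if_neg hqp, if_pos hqM, if_neg h2, h1]
      · have h1 := hfq q
        have h2 : μ q = 0 := hμ0 q hqM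
        simp only [Pi.add_apply, bag, if_neg hqp, h2, add_zero] at h1
        simp only [hmK, Pi.add_apply, bag, if_neg hqp, if_neg hqM]
        exact h1.symm
  have hKrun : K.reach mK (bag (k - k') K.O) :=
    hsK k k' hk' mK (by rw [← hνeq]; exact hνr)
  have hMrun : M.reach μ (bag (a - b) M.O) := hsM a b hba μ hμr
  set restM : Marking := fun q => if q ∈ M.P then 0 else m q with hrestM
  have hmeq : m = μ + restM := by
    funext q
    by_cases hqM : q ∈ M.P
    · have h1 := hfq q
      have hqp : q ≠ p := fun h => hpM (h ▸ hqM)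
      have hqO : q ∉ K.O := hMPKO q hqM
      simp only [Pi.add_apply, bag, if_neg hqp, if_neg hqO, add_zero,
        hν0 q (hMPK q hqM), zero_add] at h1
      simp only [hrestM, Pi.add_apply, if_pos hqM, add_zero, h1]
    · simp only [hrestM, Pi.add_apply, if_neg hqM, hμ0 q hqM, zero_add]
  have step1 : (K.subst p M).reach m (bag (a - b) M.O + restM) := by
    rw [hmeq]
    exact subst_lift_M hKpetri hd hp hMrun restM hM
  have hmK0 : ∀ q, q ∉ K.P → mK q = 0 := by
    intro q hq
    have hqp : q ≠ p := fun h => hq (h ▸ hp)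
    simp only [hmK, if_neg hqp]
    by_cases hqM : q ∈ M.P
    · rw [if_pos hqM]
    · rw [if_neg hqM]; exact hm0 q hq hqM
  have step2 : (K.subst p M).reach
      (fun q => (if q = p then 0 else mK q) + bag (mK p) M.O q)
      (fun q => (if q = p then 0 else bag (k - k') K.O q) +
        bag (bag (k - k') K.O p) M.O q) :=
    subst_lift_K hKpetri hM hd hp hsM hKrun hmK0
  have hstart : (fun q => (if q = p then 0 else mK q) + bag (mK p) M.O q) =
      bag (a - b) M.O + restM := by
    funext q
    have hmKp : mK p = a - b := by simp only [hmK, if_pos rfl]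
    by_cases hqp : q = p
    · rw [hqp]
      simp [hmKp, bag, hpMO, hrestM, hpM, hmp]
    · simp only [hmKp, Pi.add_apply, bag, if_neg hqp, hmK, hrestM]
      by_cases hqM : q ∈ M.P <;> simp [hqM] <;> omega
  have hend : (fun q => (if q = p then 0 else bag (k - k') K.O q) +
      bag (bag (k - k') K.O p) M.O q) = bag (k - k') K.O := by
    funext q
    have h1 : bag (k - k') K.O p = 0 := by simp [bag, hpO]
    rw [h1, bag_zero]
    by_cases hqp : q = p
    · rw [hqp]; simp [bag, hpO]
    · simp [hqp]
  rw [hstart] at step2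
  rw [hend] at step2
  exact step1.trans step2

end Net
namespace Net

def rename (σ : ℕ ≃ ℕ) (X : Net) : Net where
  P := X.P.image σ
  T := X.T.image σ
  F := X.F.image (Prod.map σ σ)
  I := X.I.image σ
  O := X.O.image σ

lemma mem_image_equiv (σ : ℕ ≃ ℕ) (S : Finset ℕ) (a : ℕ) :
    a ∈ S.image σ ↔ σ.symm a ∈ S := by
  simp only [Finset.mem_image]
  constructor
  · rintro ⟨b, hb, rfl⟩; simpa using hb
  · intro h; exact ⟨σ.symm a, h, by simp⟩

lemma mem_F_rename (σ : ℕ ≃ ℕ) (X : Net) (x y : ℕ) :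
    (x, y) ∈ (rename σ X).F ↔ (σ.symm x, σ.symm y) ∈ X.F := by
  simp only [rename, Finset.mem_image]
  constructor
  · rintro ⟨⟨a, b⟩, hab, h⟩
    simp only [Prod.map_apply] at h
    injection h with h1 h2
    subst h1; subst h2
    simpa using hab
  · intro h
    exact ⟨(σ.symm x, σ.symm y), h, by simp [Prod.map]⟩

lemma rename_pre (σ : ℕ ≃ ℕ) (X : Net) (t q : ℕ) :
    (rename σ X).pre t q = X.pre (σ.symm t) (σ.symm q) := by
  simp only [pre, mem_F_rename]

lemma rename_post (σ : ℕ ≃ ℕ) (X : Net) (t q : ℕ) :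
    (rename σ X).post t q = X.post (σ.symm t) (σ.symm q) := by
  simp only [post, mem_F_rename]

lemma rename_step (σ : ℕ ≃ ℕ) (X : Net) (m m' : Marking)
    (h : (rename σ X).stepRel m m') :
    X.stepRel (fun r => m (σ r)) (fun r => m' (σ r)) := by
  obtain ⟨t, ⟨ht, hpre⟩, rfl⟩ := h
  refine ⟨σ.symm t, ⟨by rwa [← mem_image_equiv σ X.T t], fun r => ?_⟩, ?_⟩
  · have := hpre (σ r)
    rwa [rename_pre, Equiv.symm_apply_apply] at this
  · funext r
    simp only [fire, rename_pre, rename_post, Equiv.symm_apply_apply]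

lemma rename_step' (σ : ℕ ≃ ℕ) (X : Net) (m m' : Marking)
    (h : X.stepRel (fun r => m (σ r)) (fun r => m' (σ r))) :
    (rename σ X).stepRel m m' := by
  obtain ⟨t, ⟨ht, hpre⟩, hfire⟩ := h
  refine ⟨σ t, ⟨Finset.mem_image_of_mem σ ht, fun q => ?_⟩, ?_⟩
  · have := hpre (σ.symm q)
    rw [rename_pre, Equiv.symm_apply_apply]
    simpa using this
  · funext q
    have := congrFun hfire (σ.symm q)
    simp only [fire, rename_pre, rename_post, Equiv.symm_apply_apply,
      Equiv.apply_symm_apply] at this ⊢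
    exact this

lemma rename_reach (σ : ℕ ≃ ℕ) (X : Net) {m m' : Marking}
    (h : (rename σ X).reach m m') :
    X.reach (fun r => m (σ r)) (fun r => m' (σ r)) := by
  induction h with
  | refl => exact Relation.ReflTransGen.refl
  | tail _ hstep ih => exact ih.tail (rename_step σ X _ _ hstep)

lemma rename_reach' (σ : ℕ ≃ ℕ) (X : Net) {a b : Marking}
    (h : X.reach a b) :
    (rename σ X).reach (fun r => a (σ.symm r)) (fun r => b (σ.symm r)) := by
  induction h with
  | refl => exact Relation.ReflTransGen.refl
  | tail _ hstep ih =>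
    refine ih.tail (rename_step' σ X _ _ ?_)
    simpa using hstep

lemma rename_bag (σ : ℕ ≃ ℕ) (k : ℕ) (S : Finset ℕ) (r : ℕ) :
    bag k (S.image σ) (σ r) = bag k S r := by
  simp only [bag, mem_image_equiv, Equiv.symm_apply_apply]

lemma rename_subSound (σ : ℕ ≃ ℕ) (X : Net) (hX : X.subSound) :
    (rename σ X).subSound := by
  intro k k' hk m h
  have h1 := rename_reach σ X h
  have e1 : (fun r => bag k ((rename σ X).I) (σ r)) = bag k X.I := by
    funext r; exact rename_bag σ k X.I r
  have e2 : (fun r => (m + bag k' ((rename σ X).O)) (σ r)) =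
      (fun r => m (σ r)) + bag k' X.O := by
    funext r
    simp only [Pi.add_apply]
    rw [show ((rename σ X).O) = X.O.image σ from rfl, rename_bag]
  rw [e1, e2] at h1
  have h2 := hX k k' hk _ h1
  have h3 := rename_reach' σ X h2
  have e3 : (fun r => (fun r' => m (σ r')) (σ.symm r)) = m := by
    funext r; simp
  have e4 : (fun r => bag (k - k') X.O (σ.symm r)) = bag (k - k') ((rename σ X).O) := by
    funext r
    simp only [bag, mem_image_equiv, rename]
  rw [e3, e4] at h3
  exact h3

end Net
namespace Net

lemma net_ext {X Y : Net} (hP : X.P = Y.P) (hT : X.T = Y.T) (hF : X.F = Y.F)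
    (hI : X.I = Y.I) (hO : X.O = Y.O) : X = Y := by
  cases X; cases Y; simp_all

lemma pc_isPetri (N : Net) (pi po : ℕ) (hN : N.IsPetri) (hNI : N.I ⊆ N.T)
    (hNO : N.O ⊆ N.T) (hpi : pi ∉ N.nodes) (hpo : po ∉ N.nodes) :
    (N.pc pi po).IsPetri := by
  constructor
  · rw [Finset.disjoint_left]
    intro x hx
    simp only [pc, Finset.mem_insert] at hx
    rcases hx with rfl | rfl | hx
    · exact fun h => hpi (Finset.mem_union_right _ h)
    · exact fun h => hpo (Finset.mem_union_right _ h)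
    · exact fun h => Finset.disjoint_left.1 hN.1 hx h
  · intro e he
    simp only [pc, Finset.mem_union, Finset.mem_image] at he
    rcases he with (⟨t, ht, rfl⟩ | ⟨t, ht, rfl⟩) | he
    · exact Or.inl ⟨Finset.mem_insert_self _ _, hNI ht⟩
    · exact Or.inr ⟨hNO ht, Finset.mem_insert_of_mem (Finset.mem_insert_self _ _)⟩
    · rcases hN.2 e he with ⟨h1, h2⟩ | ⟨h1, h2⟩
      · exact Or.inl ⟨Finset.mem_insert_of_mem (Finset.mem_insert_of_mem h1), h2⟩
      · exact Or.inr ⟨h1, Finset.mem_insert_of_mem (Finset.mem_insert_of_mem h2)⟩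

lemma pc_inEdges (N : Net) (pi po p : ℕ) (hpI : p ∉ N.I) (hpo : po ≠ p) :
    (N.pc pi po).inEdges p = N.inEdges p := by
  ext x
  simp only [mem_inEdges, pc, Finset.mem_union, Finset.mem_image]
  constructor
  · rintro ((⟨t, ht, heq⟩ | ⟨t, ht, heq⟩) | h)
    · obtain ⟨-, rfl⟩ := Prod.mk.inj heq
      exact absurd ht hpI
    · obtain ⟨-, h2⟩ := Prod.mk.inj heq
      exact absurd h2 hpo
    · exact h
  · intro h; exact Or.inr h

lemma pc_outEdges (N : Net) (pi po p : ℕ) (hpO : p ∉ N.O) (hpi : pi ≠ p) :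
    (N.pc pi po).outEdges p = N.outEdges p := by
  ext x
  simp only [mem_outEdges, pc, Finset.mem_union, Finset.mem_image]
  constructor
  · rintro ((⟨t, ht, heq⟩ | ⟨t, ht, heq⟩) | h)
    · obtain ⟨h1, -⟩ := Prod.mk.inj heq
      exact absurd h1 hpi
    · obtain ⟨rfl, -⟩ := Prod.mk.inj heq
      exact absurd ht hpO
    · exact h
  · intro h; exact Or.inr h

lemma pc_subst_comm (N M : Net) (p pi po : ℕ) (hpT : p ∉ N.T)
    (hpI : p ∉ N.I) (hpO : p ∉ N.O) (hNI : N.I ⊆ N.T) (hNO : N.O ⊆ N.T)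
    (hpi_p : pi ≠ p) (hpo_p : po ≠ p) :
    (N.pc pi po).subst p M = (N.subst p M).pc pi po := by
  have hIp : ∀ t ∈ N.I, t ≠ p := fun t ht h => hpT (h ▸ hNI ht)
  have hOp : ∀ t ∈ N.O, t ≠ p := fun t ht h => hpT (h ▸ hNO ht)
  refine net_ext ?_ rfl ?_ ?_ ?_
  · -- places
    ext a
    simp only [subst, pc, Finset.mem_union, Finset.mem_erase, Finset.mem_insert]
    constructor
    · rintro (⟨h1, (rfl | rfl | h2)⟩ | h)
      · exact Or.inl rfl
      · exact Or.inr (Or.inl rfl)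
      · exact Or.inr (Or.inr (Or.inl ⟨h1, h2⟩))
      · exact Or.inr (Or.inr (Or.inr h))
    · rintro (rfl | rfl | ⟨h1, h2⟩ | h)
      · exact Or.inl ⟨hpi_p, Or.inl rfl⟩
      · exact Or.inl ⟨hpo_p, Or.inr (Or.inl rfl)⟩
      · exact Or.inl ⟨h1, Or.inr (Or.inr h2)⟩
      · exact Or.inr h
  · -- arcs
    ext e
    obtain ⟨x, y⟩ := e
    have hpcin : ∀ x', ((x', p) ∈ (N.pc pi po).F) ↔ (x', p) ∈ N.F := fun x' => by
      rw [← mem_inEdges, pc_inEdges N pi po p hpI hpo_p, mem_inEdges]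
    have hpcout : ∀ y', ((p, y') ∈ (N.pc pi po).F) ↔ (p, y') ∈ N.F := fun y' => by
      rw [← mem_outEdges, pc_outEdges N pi po p hpO hpi_p, mem_outEdges]
    simp only [mem_subst_F, hpcin, hpcout]
    simp only [pc, Finset.mem_union, Finset.mem_image]
    simp only [mem_subst_F, subst_I hpI, subst_O hpO]
    show _ ↔ _
    constructor
    · rintro (⟨(⟨t, ht, heq⟩ | ⟨t, ht, heq⟩) | hF, hx, hy⟩ | h)
      · exact Or.inl (Or.inl ⟨t, ht, heq⟩)
      · exact Or.inl (Or.inr ⟨t, ht, heq⟩)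
      · exact Or.inr (Or.inl ⟨hF, hx, hy⟩)
      · exact Or.inr (Or.inr h)
    · rintro ((⟨t, ht, heq⟩ | ⟨t, ht, heq⟩) | ⟨hF, hx, hy⟩ | h)
      · obtain ⟨rfl, rfl⟩ := Prod.mk.inj heq
        exact Or.inl ⟨Or.inl (Or.inl ⟨t, ht, rfl⟩), hpi_p, hIp t ht⟩
      · obtain ⟨rfl, rfl⟩ := Prod.mk.inj heq
        exact Or.inl ⟨Or.inl (Or.inr ⟨t, ht, rfl⟩), hOp t ht, hpo_p⟩
      · exact Or.inl ⟨Or.inr hF, hx, hy⟩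
      · exact Or.inr h
  · -- input
    have h1 : p ∉ (N.pc pi po).I := by
      simp only [pc, Finset.mem_singleton]
      exact fun h => hpi_p h.symm
    rw [subst_I h1]; rfl
  · -- output
    have h1 : p ∉ (N.pc pi po).O := by
      simp only [pc, Finset.mem_singleton]
      exact fun h => hpo_p h.symm
    rw [subst_O h1]; rfl

end Net
namespace Net

lemma subst_nodes_sub (N M : Net) (p : ℕ) :
    (N.subst p M).nodes ⊆ N.nodes ∪ M.nodes := by
  intro x hx
  simp only [nodes, subst, Finset.mem_union, Finset.mem_erase] at hx ⊢
  tauto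

lemma subst_F_nodes (N M : Net) (p : ℕ) (hNpetri : N.IsPetri) (hMpetri : M.IsPetri)
    (hp : p ∈ N.P) (hMI : M.I ⊆ M.P) (hMO : M.O ⊆ M.P) {x y : ℕ}
    (h : (x, y) ∈ (N.subst p M).F) :
    x ∈ (N.subst p M).nodes ∧ y ∈ (N.subst p M).nodes := by
  have hpT : p ∉ N.T := Finset.disjoint_left.1 hNpetri.1 hp
  have hN : ∀ a b : ℕ, (a, b) ∈ N.F → a ≠ p → b ≠ p →
      a ∈ (N.subst p M).nodes ∧ b ∈ (N.subst p M).nodes := by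
    intro a b hab ha hb
    have h1 := N.mem_nodes_of_F hNpetri hab
    constructor <;>
    · simp only [nodes, subst, Finset.mem_union, Finset.mem_erase]
      simp only [nodes, Finset.mem_union] at h1
      tauto
  have hMnodes : ∀ a, a ∈ M.nodes → a ∈ (N.subst p M).nodes := by
    intro a ha
    simp only [nodes, Finset.mem_union] at ha
    simp only [nodes, subst, Finset.mem_union]
    tauto
  rcases (mem_subst_F N M p).1 h with ⟨h1, hx, hy⟩ | h1 | ⟨h1, h2⟩ | ⟨h1, h2⟩
  · exact hN x y h1 hx hy
  · have h2 := M.mem_nodes_of_F hMpetri h1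
    exact ⟨hMnodes x h2.1, hMnodes y h2.2⟩
  · have hxT : x ∈ N.T := by
      rcases hNpetri.2 _ h1 with ⟨-, h3⟩ | ⟨h3, -⟩
      · exact absurd h3 hpT
      · exact h3
    have hxp : x ≠ p := fun h => hpT (h ▸ hxT)
    refine ⟨?_, hMnodes y (Finset.mem_union_left _ (hMI h2))⟩
    simp only [nodes, subst, Finset.mem_union, Finset.mem_erase]
    exact Or.inr (Or.inl ⟨hxp, hxT⟩)
  · have hyT : y ∈ N.T := by
      rcases hNpetri.2 _ h2 with ⟨-, h3⟩ | ⟨h3, -⟩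
      · exact h3
      · exact absurd h3 hpT
    have hyp : y ≠ p := fun h => hpT (h ▸ hyT)
    refine ⟨hMnodes x (Finset.mem_union_left _ (hMO h1)), ?_⟩
    simp only [nodes, subst, Finset.mem_union, Finset.mem_erase]
    exact Or.inr (Or.inl ⟨hyp, hyT⟩)

end Net

open Net in
theorem stmt13 (N M : Net) (p : ℕ) (hN : N.IsTWF) (hM : M.IsPWF)
    (hd : Disjoint N.nodes M.nodes) (hp : p ∈ N.P)
    (hsN : N.tSubSound) (hsM : M.subSound) : (N.subst p M).tSubSound := by
  obtain ⟨hNpetri, hNI, hNO, hINE, hONE, hNconn⟩ := hN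
  intro pi po hpi hpo hne
  have hpTN : p ∉ N.T := Finset.disjoint_left.1 hNpetri.1 hp
  have hpNI : p ∉ N.I := fun h => hpTN (hNI h)
  have hpNO : p ∉ N.O := fun h => hpTN (hNO h)
  -- choose fresh names
  set S : Finset ℕ := (N.nodes ∪ M.nodes) ∪ {pi, po, p} with hS
  obtain ⟨pi', hpi'⟩ := Infinite.exists_notMem_finset S
  obtain ⟨po', hpo'⟩ := Infinite.exists_notMem_finset (insert pi' S)
  have hpo'S : po' ∉ S := fun h => hpo' (Finset.mem_insert_of_mem h)
  have hpi'po' : pi' ≠ po' := fun h => hpo' (h ▸ Finset.mem_insert_self _ _)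
  have hSN : N.nodes ⊆ S := by
    intro x hx; exact Finset.mem_union_left _ (Finset.mem_union_left _ hx)
  have hSM : M.nodes ⊆ S := by
    intro x hx; exact Finset.mem_union_left _ (Finset.mem_union_right _ hx)
  have hpS : p ∈ S := Finset.mem_union_right _ (by simp)
  have hpiS : pi ∈ S := Finset.mem_union_right _ (by simp)
  have hpoS : po ∈ S := Finset.mem_union_right _ (by simp)
  have hpi'N : pi' ∉ N.nodes := fun h => hpi' (hSN h)
  have hpo'N : po' ∉ N.nodes := fun h => hpo'S (hSN h)
  have hpi'p : pi' ≠ p := fun h => hpi' (h ▸ hpS)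
  have hpo'p : po' ≠ p := fun h => hpo'S (h ▸ hpS)
  -- place completion of N with fresh names
  have hKsub : (N.pc pi' po').subSound := hsN pi' po' hpi'N hpo'N hpi'po'
  have hKpetri : (N.pc pi' po').IsPetri :=
    pc_isPetri N pi' po' hNpetri hNI hNO hpi'N hpo'N
  have hdK : Disjoint (N.pc pi' po').nodes M.nodes := by
    rw [Finset.disjoint_left]
    intro x hx
    simp only [nodes, pc, Finset.mem_union, Finset.mem_insert] at hx
    rcases hx with (rfl | rfl | hx) | hx
    · exact fun h => hpi' (hSM h)
    · exact fun h => hpo'S (hSM h)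
    · exact fun h => Finset.disjoint_left.1 hd (Finset.mem_union_left _ hx) h
    · exact fun h => Finset.disjoint_left.1 hd (Finset.mem_union_right _ hx) h
  have hpK : p ∈ (N.pc pi' po').P := by
    simp only [pc, Finset.mem_insert]
    exact Or.inr (Or.inr hp)
  have hpKI : p ∉ (N.pc pi' po').I := by
    simp only [pc, Finset.mem_singleton]
    exact fun h => hpi'p h.symm
  have hpKO : p ∉ (N.pc pi' po').O := by
    simp only [pc, Finset.mem_singleton]
    exact fun h => hpo'p h.symm
  have hKI : (N.pc pi' po').I ⊆ (N.pc pi' po').P := by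
    simp only [pc]
    intro x hx
    rw [Finset.mem_singleton] at hx
    exact hx ▸ Finset.mem_insert_self _ _
  have hKO : (N.pc pi' po').O ⊆ (N.pc pi' po').P := by
    simp only [pc]
    intro x hx
    rw [Finset.mem_singleton] at hx
    exact hx ▸ Finset.mem_insert_of_mem (Finset.mem_insert_self _ _)
  have hsub : ((N.pc pi' po').subst p M).subSound :=
    Net.subst_subSound _ M p hKpetri hM hdK hpK hpKI hpKO hKI hKO hKsub hsM
  rw [Net.pc_subst_comm N M p pi' po' hpTN hpNI hpNO hNI hNO hpi'p hpo'p] at hsub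
  -- rename the fresh names to the required ones
  set Y := N.subst p M with hY
  set σ : ℕ ≃ ℕ := (Equiv.swap po' po).trans (Equiv.swap pi' pi) with hσ
  have hpi'po : pi' ≠ po := fun h => hpi' (h ▸ hpoS)
  have hpi'pi : pi' ≠ pi := fun h => hpi' (h ▸ hpiS)
  have hpo'po : po' ≠ po := fun h => hpo'S (h ▸ hpoS)
  have hpo'pi : po' ≠ pi := fun h => hpo'S (h ▸ hpiS)
  have hσpi' : σ pi' = pi := by
    simp only [hσ, Equiv.trans_apply]
    rw [Equiv.swap_apply_of_ne_of_ne hpi'po' hpi'po, Equiv.swap_apply_left]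
  have hσpo' : σ po' = po := by
    simp only [hσ, Equiv.trans_apply]
    rw [Equiv.swap_apply_left,
      Equiv.swap_apply_of_ne_of_ne (Ne.symm hpi'po) (Ne.symm hne)]
  have hfix : ∀ x ∈ Y.nodes, σ x = x := by
    intro x hx
    have hxNM : x ∈ N.nodes ∪ M.nodes := subst_nodes_sub N M p hx
    have hxS : x ∈ S := by
      rcases Finset.mem_union.1 hxNM with h | h
      · exact hSN h
      · exact hSM h
    have h1 : x ≠ po' := fun h => hpo'S (h ▸ hxS)
    have h2 : x ≠ po := fun h => hpo (h ▸ hx)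
    have h3 : x ≠ pi' := fun h => hpi' (h ▸ hxS)
    have h4 : x ≠ pi := fun h => hpi (h ▸ hx)
    simp only [hσ, Equiv.trans_apply]
    rw [Equiv.swap_apply_of_ne_of_ne h1 h2, Equiv.swap_apply_of_ne_of_ne h3 h4]
  have hYF : ∀ e ∈ Y.F, e.1 ∈ Y.nodes ∧ e.2 ∈ Y.nodes := by
    rintro ⟨x, y⟩ he
    exact subst_F_nodes N M p hNpetri hM.1 hp hM.2.1 hM.2.2.1 he
  have hren : Net.rename σ (Y.pc pi' po') = Y.pc pi po := by
    have hPfix : Y.P.image σ = Y.P := by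
      rw [Finset.image_congr (g := id) ?_, Finset.image_id]
      intro x hx
      exact hfix x (Finset.mem_union_left _ hx)
    have hTfix : Y.T.image σ = Y.T := by
      rw [Finset.image_congr (g := id) ?_, Finset.image_id]
      intro x hx
      exact hfix x (Finset.mem_union_right _ hx)
    refine net_ext ?_ ?_ ?_ ?_ ?_
    · show (insert pi' (insert po' Y.P)).image σ = insert pi (insert po Y.P)
      rw [Finset.image_insert, Finset.image_insert, hσpi', hσpo', hPfix]
    · exact hTfix
    · show ((Y.I.image fun t => (pi', t)) ∪ (Y.O.image fun t => (t, po')) ∪ Y.F).image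
        (Prod.map σ σ) = (Y.I.image fun t => (pi, t)) ∪ (Y.O.image fun t => (t, po)) ∪ Y.F
      rw [Finset.image_union, Finset.image_union, Finset.image_image,
        Finset.image_image]
      congr 1
      congr 1
      · apply Finset.image_congr
        intro t ht
        have htN : t ∈ N.I := by
          rwa [show Y.I = N.I from if_neg hpNI] at ht
        have htT : t ∈ N.T := hNI htN
        have htp : t ≠ p := fun h => hpTN (h ▸ htT)
        have htY : t ∈ Y.nodes := Finset.mem_union_right _
          (Finset.mem_union_left _ (Finset.mem_erase.2 ⟨htp, htT⟩))
        simp only [Function.comp, Prod.map_apply, hσpi']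
        rw [hfix t htY]
      · apply Finset.image_congr
        intro t ht
        have htN : t ∈ N.O := by
          rwa [show Y.O = N.O from if_neg hpNO] at ht
        have htT : t ∈ N.T := hNO htN
        have htp : t ≠ p := fun h => hpTN (h ▸ htT)
        have htY : t ∈ Y.nodes := Finset.mem_union_right _
          (Finset.mem_union_left _ (Finset.mem_erase.2 ⟨htp, htT⟩))
        simp only [Function.comp, Prod.map_apply, hσpo']
        rw [hfix t htY]
      · rw [Finset.image_congr (g := id) ?_, Finset.image_id]
        rintro ⟨x, y⟩ hxy
        obtain ⟨h1, h2⟩ := hYF _ hxy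
        simp only [Prod.map_apply, id_eq]
        rw [hfix x h1, hfix y h2]
    · show ({pi'} : Finset ℕ).image σ = {pi}
      rw [Finset.image_singleton, hσpi']
    · show ({po'} : Finset ℕ).image σ = {po}
      rw [Finset.image_singleton, hσpo']
  have hfinal := Net.rename_subSound σ _ hsub
  rwa [hren] at hfinal
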